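/- Let A be a unital complex Banach algebra, K ∈ A, M ≥ 0 and 0 < δ ≤ 1, and suppose Y : ℝ → A satisfies ‖Y(s) − 1 − s·K‖ ≤ M s² for all s ∈ (0, δ]. Then for every finite list (t_1, …, t_n) of reals with 0 < t_k ≤ δ, setting t := t_1 + ⋯ + t_n and ‖t‖ := max_k t_k, one has ‖Y(t_1) Y(t_2) ⋯ Y(t_n) − exp(tK)‖ ≤ ‖t‖ · t · exp(t(‖K‖ + M)) · (M + ‖K‖² exp(t‖K‖)). -/

import Mathlib

open NormedSpace Nat in
section

private lemma my_norm_exp_le {A : Type*} [NormedRing A] [NormOneClass A] [NormedAlgebra ℂ A]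
    [CompleteSpace A] (x : A) : ‖exp x‖ ≤ Real.exp ‖x‖ := by
  have h1 : exp x = ∑' n : ℕ, (n !⁻¹ : ℂ) • x ^ n := by
    rw [exp_eq_tsum ℂ]
  have hb : ∀ n : ℕ, ‖(n !⁻¹ : ℂ) • x ^ n‖ ≤ ‖x‖ ^ n / n ! := by
    intro n
    rw [norm_smul]
    have hp : ‖x ^ n‖ ≤ ‖x‖ ^ n := by
      rcases Nat.eq_zero_or_pos n with h | h
      · simp [h]
      · exact norm_pow_le' x h
    calc ‖(n !⁻¹ : ℂ)‖ * ‖x ^ n‖ ≤ (n ! : ℝ)⁻¹ * ‖x‖ ^ n := by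
          apply mul_le_mul _ hp (norm_nonneg _) (by positivity)
          simp [norm_inv, Complex.norm_natCast]
      _ = ‖x‖ ^ n / n ! := by ring
  have hsum : HasSum (fun n : ℕ => ‖x‖ ^ n / n !) (Real.exp ‖x‖) := by
    rw [Real.exp_eq_exp_ℝ]
    exact expSeries_div_hasSum_exp ‖x‖
  calc ‖exp x‖ ≤ ∑' n : ℕ, ‖(n !⁻¹ : ℂ) • x ^ n‖ := by
        rw [h1]
        exact norm_tsum_le_tsum_norm (Summable.of_nonneg_of_le (fun n => norm_nonneg _) hb
          hsum.summable)
    _ ≤ ∑' n : ℕ, ‖x‖ ^ n / n ! :=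
        Summable.tsum_le_tsum hb (Summable.of_nonneg_of_le (fun n => norm_nonneg _) hb hsum.summable)
          hsum.summable
    _ = Real.exp ‖x‖ := hsum.tsum_eq

private lemma my_exp_remainder {A : Type*} [NormedRing A] [NormOneClass A] [NormedAlgebra ℂ A]
    [CompleteSpace A] (x : A) : ‖exp x - 1 - x‖ ≤ ‖x‖ ^ 2 * Real.exp ‖x‖ := by
  have h1 : HasSum (fun n : ℕ => (n !⁻¹ : ℂ) • x ^ n) (exp x) := exp_series_hasSum_exp' x
  have h2 : HasSum (fun n : ℕ => ((n + 2)!⁻¹ : ℂ) • x ^ (n + 2))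
      (exp x - (1 + x)) := by
    have := (hasSum_nat_add_iff' (f := fun n : ℕ => (n !⁻¹ : ℂ) • x ^ n) 2).mpr h1
    simpa [Finset.sum_range_succ] using this
  have hb : ∀ n : ℕ, ‖((n + 2)!⁻¹ : ℂ) • x ^ (n + 2)‖ ≤ ‖x‖ ^ n / n ! * ‖x‖ ^ 2 := by
    intro n
    rw [norm_smul]
    have h3 : ‖((n + 2)!⁻¹ : ℂ)‖ = ((n + 2)! : ℝ)⁻¹ := by
      simp [norm_inv, Complex.norm_natCast]
    rw [h3]
    have h4 : ((n + 2)! : ℝ)⁻¹ ≤ (n ! : ℝ)⁻¹ := by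
      apply inv_anti₀ (by positivity)
      exact_mod_cast Nat.factorial_le (by omega)
    calc ((n + 2)! : ℝ)⁻¹ * ‖x ^ (n + 2)‖ ≤ (n ! : ℝ)⁻¹ * ‖x‖ ^ (n + 2) := by
          apply mul_le_mul h4 (norm_pow_le' x (by omega)) (norm_nonneg _) (by positivity)
      _ = ‖x‖ ^ n / n ! * ‖x‖ ^ 2 := by rw [pow_add]; ring
  have hsum : HasSum (fun n : ℕ => ‖x‖ ^ n / n ! * ‖x‖ ^ 2)
      (Real.exp ‖x‖ * ‖x‖ ^ 2) := by
    apply HasSum.mul_right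
    rw [Real.exp_eq_exp_ℝ]
    exact expSeries_div_hasSum_exp ‖x‖
  have key : ‖exp x - (1 + x)‖ ≤ Real.exp ‖x‖ * ‖x‖ ^ 2 := by
    rw [← h2.tsum_eq]
    calc ‖∑' n : ℕ, ((n + 2)!⁻¹ : ℂ) • x ^ (n + 2)‖
        ≤ ∑' n : ℕ, ‖((n + 2)!⁻¹ : ℂ) • x ^ (n + 2)‖ :=
          norm_tsum_le_tsum_norm (Summable.of_nonneg_of_le (fun n => norm_nonneg _) hb
            hsum.summable)
      _ ≤ ∑' n : ℕ, ‖x‖ ^ n / n ! * ‖x‖ ^ 2 :=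
          Summable.tsum_le_tsum hb (Summable.of_nonneg_of_le (fun n => norm_nonneg _) hb hsum.summable)
            hsum.summable
      _ = Real.exp ‖x‖ * ‖x‖ ^ 2 := hsum.tsum_eq
  calc ‖exp x - 1 - x‖ = ‖exp x - (1 + x)‖ := by rw [sub_sub]
    _ ≤ Real.exp ‖x‖ * ‖x‖ ^ 2 := key
    _ = ‖x‖ ^ 2 * Real.exp ‖x‖ := by ring

end

open NormedSpace Nat

section
set_option linter.unusedSectionVars false
variable {A : Type*} [NormedRing A] [NormOneClass A] [NormedAlgebra ℂ A] [CompleteSpace A]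

lemma my_norm_exp_smul_le (K : A) {s : ℝ} (hs : 0 ≤ s) :
    ‖exp ((s : ℂ) • K)‖ ≤ Real.exp (s * ‖K‖) := by
  refine (my_norm_exp_le _).trans ?_
  rw [norm_smul, Complex.norm_real, Real.norm_eq_abs, abs_of_nonneg hs]

lemma my_key (K : A) (M δ : ℝ) (hM : 0 ≤ M) (hδ1 : δ ≤ 1) (Y : ℝ → A)
    (hY : ∀ s ∈ Set.Ioc (0 : ℝ) δ, ‖Y s - 1 - s • K‖ ≤ M * s ^ 2) :
    ∀ l : List ℝ, (∀ s ∈ l, s ∈ Set.Ioc (0 : ℝ) δ) →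
      ‖(l.map Y).prod - exp ((l.sum : ℂ) • K)‖ ≤
        (l.map (fun s => s ^ 2)).sum * Real.exp (l.sum * (‖K‖ + M))
          * (M + ‖K‖ ^ 2 * Real.exp (l.sum * ‖K‖)) := by
  have hYn : ∀ s ∈ Set.Ioc (0 : ℝ) δ, ‖Y s‖ ≤ Real.exp (s * (‖K‖ + M)) := by
    intro s hs
    obtain ⟨hs0, hsδ⟩ := hs
    have heq : Y s = (Y s - 1 - s • K) + ((1 : A) + s • K) := by abel
    have h1 := norm_add_le (Y s - 1 - s • K) ((1 : A) + s • K)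
    rw [← heq] at h1
    have h2 : ‖(1 : A) + s • K‖ ≤ 1 + s * ‖K‖ := by
      refine (norm_add_le _ _).trans ?_
      rw [norm_one, norm_smul, Real.norm_eq_abs, abs_of_pos hs0]
    have hs1 : s ≤ 1 := hsδ.trans hδ1
    have hsq : s ^ 2 ≤ s := by nlinarith
    have h3 : M * s ^ 2 ≤ M * s := mul_le_mul_of_nonneg_left hsq hM
    calc ‖Y s‖ ≤ M * s + (1 + s * ‖K‖) := by
          have := hY s ⟨hs0, hsδ⟩; linarith
      _ = s * (‖K‖ + M) + 1 := by ring
      _ ≤ Real.exp (s * (‖K‖ + M)) := Real.add_one_le_exp _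
  have hYE : ∀ s ∈ Set.Ioc (0 : ℝ) δ,
      ‖Y s - exp ((s : ℂ) • K)‖ ≤ s ^ 2 * (M + ‖K‖ ^ 2 * Real.exp (s * ‖K‖)) := by
    intro s hs
    obtain ⟨hs0, hsδ⟩ := hs
    have hcast : ((s : ℂ) • K) = s • K := Complex.coe_smul s K
    have h1 : ‖exp ((s : ℂ) • K) - 1 - s • K‖ ≤ s ^ 2 * ‖K‖ ^ 2 * Real.exp (s * ‖K‖) := by
      have := my_exp_remainder ((s : ℂ) • K)
      rw [hcast] at this ⊢
      have hn : ‖s • K‖ = s * ‖K‖ := by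
        rw [norm_smul, Real.norm_eq_abs, abs_of_pos hs0]
      rw [hn] at this
      calc ‖exp (s • K) - 1 - s • K‖ ≤ (s * ‖K‖) ^ 2 * Real.exp (s * ‖K‖) := this
        _ = s ^ 2 * ‖K‖ ^ 2 * Real.exp (s * ‖K‖) := by ring
    have h2 : Y s - exp ((s : ℂ) • K)
        = (Y s - 1 - s • K) - (exp ((s : ℂ) • K) - 1 - s • K) := by abel
    calc ‖Y s - exp ((s : ℂ) • K)‖
        ≤ ‖Y s - 1 - s • K‖ + ‖exp ((s : ℂ) • K) - 1 - s • K‖ := by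
          rw [h2]; exact norm_sub_le _ _
      _ ≤ M * s ^ 2 + s ^ 2 * ‖K‖ ^ 2 * Real.exp (s * ‖K‖) := by
          have := hY s ⟨hs0, hsδ⟩; linarith
      _ = s ^ 2 * (M + ‖K‖ ^ 2 * Real.exp (s * ‖K‖)) := by ring
  intro l
  induction l with
  | nil => simp
  | cons s l ih =>
    intro hl
    have hs : s ∈ Set.Ioc (0 : ℝ) δ := hl s (List.mem_cons_self)
    have hl' : ∀ u ∈ l, u ∈ Set.Ioc (0 : ℝ) δ := fun u hu => hl u (List.mem_cons_of_mem _ hu)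
    have hS'0 : 0 ≤ l.sum := List.sum_nonneg fun u hu => (hl' u hu).1.le
    have hs0 : 0 < s := hs.1
    have hK0 : (0 : ℝ) ≤ ‖K‖ := norm_nonneg K
    set S' := l.sum with hS'
    set S := s + S' with hSdef
    have hSS' : S' ≤ S := by simp [hSdef, hs0.le]
    have hsS : s ≤ S := by simp [hSdef, hS'0]
    have hS0 : 0 ≤ S := by linarith [hs0.le]
    -- exp splits
    have hexp : exp ((((s :: l).sum : ℝ) : ℂ) • K)
        = exp ((s : ℂ) • K) * exp ((S' : ℂ) • K) := by
      rw [List.sum_cons]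
      push_cast
      rw [add_smul]
      exact exp_add_of_commute_of_mem_ball (𝕂 := ℂ) (Commute.smul_left (Commute.smul_right (Commute.refl K) _) _)
        ((expSeries_radius_eq_top ℂ A).symm ▸ edist_lt_top _ _)
        ((expSeries_radius_eq_top ℂ A).symm ▸ edist_lt_top _ _)
    have hsplit : ((s :: l).map Y).prod - exp ((((s :: l).sum : ℝ) : ℂ) • K)
        = Y s * ((l.map Y).prod - exp ((S' : ℂ) • K))
          + (Y s - exp ((s : ℂ) • K)) * exp ((S' : ℂ) • K) := by
      rw [List.map_cons, List.prod_cons, hexp, mul_sub, sub_mul]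
      abel
    set Q := (l.map (fun u => u ^ 2)).sum with hQ
    have hQ0 : 0 ≤ Q := List.sum_nonneg (by
      intro x hx
      simp only [List.mem_map] at hx
      obtain ⟨u, _, rfl⟩ := hx
      positivity)
    have hterm1 : ‖Y s * ((l.map Y).prod - exp ((S' : ℂ) • K))‖
        ≤ Real.exp (s * (‖K‖ + M)) * (Q * Real.exp (S' * (‖K‖ + M))
            * (M + ‖K‖ ^ 2 * Real.exp (S' * ‖K‖))) := by
      refine (norm_mul_le _ _).trans ?_
      exact mul_le_mul (hYn s hs) (ih hl') (norm_nonneg _) (Real.exp_pos _).le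
    have hterm2 : ‖(Y s - exp ((s : ℂ) • K)) * exp ((S' : ℂ) • K)‖
        ≤ s ^ 2 * (M + ‖K‖ ^ 2 * Real.exp (s * ‖K‖)) * Real.exp (S' * ‖K‖) := by
      refine (norm_mul_le _ _).trans ?_
      exact mul_le_mul (hYE s hs) (my_norm_exp_smul_le K hS'0) (norm_nonneg _)
        (by positivity)
    -- arithmetic
    have hKM : ‖K‖ ≤ ‖K‖ + M := by linarith
    have e1 : Real.exp (S' * (‖K‖ + M)) ≤ Real.exp (S * (‖K‖ + M)) :=
      Real.exp_le_exp.2 (by nlinarith)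
    have e2 : Real.exp (S' * ‖K‖) ≤ Real.exp (S * ‖K‖) :=
      Real.exp_le_exp.2 (by nlinarith)
    have e3 : Real.exp (s * ‖K‖) * Real.exp (S' * ‖K‖) = Real.exp (S * ‖K‖) := by
      rw [← Real.exp_add, hSdef]; ring_nf
    have e4 : (1 : ℝ) ≤ Real.exp (S * (‖K‖ + M)) :=
      Real.one_le_exp (by nlinarith)
    have hbig : s ^ 2 * (M + ‖K‖ ^ 2 * Real.exp (s * ‖K‖)) * Real.exp (S' * ‖K‖)
        ≤ s ^ 2 * Real.exp (S * (‖K‖ + M)) * (M + ‖K‖ ^ 2 * Real.exp (S * ‖K‖)) := by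
      have eS' : Real.exp (S' * ‖K‖) ≤ Real.exp (S * (‖K‖ + M)) := by
        refine Real.exp_le_exp.2 ?_
        nlinarith
      have expand : s ^ 2 * (M + ‖K‖ ^ 2 * Real.exp (s * ‖K‖)) * Real.exp (S' * ‖K‖)
          = s ^ 2 * (M * Real.exp (S' * ‖K‖) + ‖K‖ ^ 2 * Real.exp (S * ‖K‖)) := by
        rw [← e3]; ring
      rw [expand]
      have h5 : M * Real.exp (S' * ‖K‖) + ‖K‖ ^ 2 * Real.exp (S * ‖K‖)
          ≤ Real.exp (S * (‖K‖ + M)) * (M + ‖K‖ ^ 2 * Real.exp (S * ‖K‖)) := by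
        have p1 : M * Real.exp (S' * ‖K‖) ≤ Real.exp (S * (‖K‖ + M)) * M := by
          calc M * Real.exp (S' * ‖K‖) ≤ M * Real.exp (S * (‖K‖ + M)) :=
                mul_le_mul_of_nonneg_left eS' hM
            _ = Real.exp (S * (‖K‖ + M)) * M := by ring
        have p2 : ‖K‖ ^ 2 * Real.exp (S * ‖K‖)
            ≤ Real.exp (S * (‖K‖ + M)) * (‖K‖ ^ 2 * Real.exp (S * ‖K‖)) :=
          le_mul_of_one_le_left (by positivity) e4
        calc M * Real.exp (S' * ‖K‖) + ‖K‖ ^ 2 * Real.exp (S * ‖K‖)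
            ≤ Real.exp (S * (‖K‖ + M)) * M
              + Real.exp (S * (‖K‖ + M)) * (‖K‖ ^ 2 * Real.exp (S * ‖K‖)) := by linarith
          _ = Real.exp (S * (‖K‖ + M)) * (M + ‖K‖ ^ 2 * Real.exp (S * ‖K‖)) := by ring
      calc s ^ 2 * (M * Real.exp (S' * ‖K‖) + ‖K‖ ^ 2 * Real.exp (S * ‖K‖))
          ≤ s ^ 2 * (Real.exp (S * (‖K‖ + M)) * (M + ‖K‖ ^ 2 * Real.exp (S * ‖K‖))) :=
            mul_le_mul_of_nonneg_left h5 (sq_nonneg s)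
        _ = s ^ 2 * Real.exp (S * (‖K‖ + M)) * (M + ‖K‖ ^ 2 * Real.exp (S * ‖K‖)) := by
            ring
    have hsum2 : ((s :: l).map (fun u => u ^ 2)).sum = s ^ 2 + Q := by
      simp [hQ]
    calc ‖((s :: l).map Y).prod - exp ((((s :: l).sum : ℝ) : ℂ) • K)‖
        ≤ ‖Y s * ((l.map Y).prod - exp ((S' : ℂ) • K))‖
          + ‖(Y s - exp ((s : ℂ) • K)) * exp ((S' : ℂ) • K)‖ := by
          rw [hsplit]; exact norm_add_le _ _
      _ ≤ Real.exp (s * (‖K‖ + M)) * (Q * Real.exp (S' * (‖K‖ + M))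
            * (M + ‖K‖ ^ 2 * Real.exp (S' * ‖K‖)))
          + s ^ 2 * (M + ‖K‖ ^ 2 * Real.exp (s * ‖K‖)) * Real.exp (S' * ‖K‖) := by
          linarith
      _ ≤ Q * Real.exp (S * (‖K‖ + M)) * (M + ‖K‖ ^ 2 * Real.exp (S * ‖K‖))
          + s ^ 2 * Real.exp (S * (‖K‖ + M)) * (M + ‖K‖ ^ 2 * Real.exp (S * ‖K‖)) := by
          have t1 : Real.exp (s * (‖K‖ + M)) * (Q * Real.exp (S' * (‖K‖ + M))
              * (M + ‖K‖ ^ 2 * Real.exp (S' * ‖K‖)))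
              ≤ Q * Real.exp (S * (‖K‖ + M)) * (M + ‖K‖ ^ 2 * Real.exp (S * ‖K‖)) := by
            have eprod : Real.exp (s * (‖K‖ + M)) * Real.exp (S' * (‖K‖ + M))
                = Real.exp (S * (‖K‖ + M)) := by rw [← Real.exp_add, hSdef]; ring_nf
            have inner : M + ‖K‖ ^ 2 * Real.exp (S' * ‖K‖)
                ≤ M + ‖K‖ ^ 2 * Real.exp (S * ‖K‖) := by
              have := mul_le_mul_of_nonneg_left e2 (sq_nonneg ‖K‖); linarith
            calc Real.exp (s * (‖K‖ + M)) * (Q * Real.exp (S' * (‖K‖ + M))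
                  * (M + ‖K‖ ^ 2 * Real.exp (S' * ‖K‖)))
                = Q * Real.exp (S * (‖K‖ + M)) * (M + ‖K‖ ^ 2 * Real.exp (S' * ‖K‖)) := by
                  rw [← eprod]; ring
              _ ≤ Q * Real.exp (S * (‖K‖ + M)) * (M + ‖K‖ ^ 2 * Real.exp (S * ‖K‖)) :=
                  mul_le_mul_of_nonneg_left inner (by positivity)
          linarith [hbig]
      _ = ((s :: l).map (fun u => u ^ 2)).sum * Real.exp ((s :: l).sum * (‖K‖ + M))
          * (M + ‖K‖ ^ 2 * Real.exp ((s :: l).sum * ‖K‖)) := by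
          rw [hsum2, List.sum_cons]
          ring

end

/-- The Banach-algebra content of Proposition 3.3(1): under the infinitesimal hypothesis
`‖Y s − 1 − s K‖ ≤ M s²` on `(0, δ]` (with `δ ≤ 1`), for every tuple `t = (t₁, …, tₙ)` with
`0 < tₖ ≤ δ`, writing `t := Σ tₖ` and `‖t‖ := max tₖ`,
`‖Y(t₁)⋯Y(tₙ) − exp (t K)‖ ≤ ‖t‖ · t · exp (t (‖K‖ + M)) · (M + ‖K‖² exp (t ‖K‖))`. -/
theorem stmt_7 {A : Type*} [NormedRing A] [NormOneClass A] [NormedAlgebra ℂ A]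
    [CompleteSpace A] (K : A) (M δ : ℝ) (hM : 0 ≤ M) (hδ0 : 0 < δ) (hδ1 : δ ≤ 1)
    (Y : ℝ → A)
    (hY : ∀ s ∈ Set.Ioc (0 : ℝ) δ, ‖Y s - 1 - s • K‖ ≤ M * s ^ 2) :
    ∀ (n : ℕ) (t : Fin n → ℝ), (∀ k, t k ∈ Set.Ioc (0 : ℝ) δ) →
      ‖(List.ofFn fun k => Y (t k)).prod - NormedSpace.exp ((∑ k, t k) • K)‖ ≤
        (⨆ k, t k) * (∑ k, t k) * Real.exp ((∑ k, t k) * (‖K‖ + M))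
          * (M + ‖K‖ ^ 2 * Real.exp ((∑ k, t k) * ‖K‖)) := by
  intro n t ht
  rcases Nat.eq_zero_or_pos n with rfl | hn
  · simp [ciSup_of_empty]
  have : Nonempty (Fin n) := Fin.pos_iff_nonempty.mp hn
  set l : List ℝ := List.ofFn t with hl
  have hmem : ∀ s ∈ l, s ∈ Set.Ioc (0 : ℝ) δ := by
    intro s hs
    rw [hl, List.mem_ofFn] at hs
    obtain ⟨k, rfl⟩ := hs
    exact ht k
  have hsum : l.sum = ∑ k, t k := by rw [hl, List.sum_ofFn]
  have hmap : l.map Y = List.ofFn fun k => Y (t k) := by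
    rw [hl, List.map_ofFn]; rfl
  have hsq : (l.map (fun s => s ^ 2)).sum = ∑ k, (t k) ^ 2 := by
    rw [hl, List.map_ofFn, List.sum_ofFn]; rfl
  have hcast : (((l.sum : ℝ)) • K : A) = ((l.sum : ℂ)) • K := (Complex.coe_smul _ _).symm
  have hkey := my_key K M δ hM hδ1 Y hY l hmem
  rw [hmap, hsum, Complex.coe_smul] at hkey
  -- now bound ∑ (t k)^2 ≤ (⨆ k, t k) * ∑ t k
  set T := ⨆ k, t k with hT
  have hTk : ∀ k, t k ≤ T := fun k => le_ciSup (Set.Finite.bddAbove (Set.finite_range t)) k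
  have hT0 : 0 ≤ T := le_trans (ht (Classical.arbitrary _)).1.le (hTk _)
  have hsum0 : 0 ≤ ∑ k, t k := Finset.sum_nonneg fun k _ => (ht k).1.le
  have hQT : ∑ k, (t k) ^ 2 ≤ T * ∑ k, t k := by
    rw [Finset.mul_sum]
    refine Finset.sum_le_sum fun k _ => ?_
    have := mul_le_mul_of_nonneg_right (hTk k) (ht k).1.le
    nlinarith [this]
  rw [hsq] at hkey
  refine hkey.trans ?_
  have hpos : (0 : ℝ) ≤ M + ‖K‖ ^ 2 * Real.exp ((∑ k, t k) * ‖K‖) := by positivity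
  exact mul_le_mul_of_nonneg_right
    (mul_le_mul_of_nonneg_right hQT (Real.exp_pos ((∑ k, t k) * (‖K‖ + M))).le) hpos
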